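/- Let d ≥ 3 and let P be any subposet of 2^d \ {0, 1} (the d-cube with its top and bottom elements removed) that contains the standard example S_d (realized in 2^d by sending a_i to the d-tuple with 1 in the i-th coordinate and 0 elsewhere, and b_i to the d-tuple with 0 in the i-th coordinate and 1 elsewhere). Then for any two chains C_0 and C_1, dim(P × C_0 × C_1) = d = dim(P). -/

import Mathlib

universe u

/-- The order dimension of a poset: the least cardinal `κ` such that the partial
order is the intersection of `κ` linear orderings (each extending it). -/
noncomputable def orderDim (α : Type u) [PartialOrder α] : Cardinal.{u} :=
  sInf {κ : Cardinal.{u} | ∃ (ι : Type u) (r : ι → α → α → Prop),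
    (∀ i, IsLinearOrder α (r i)) ∧
    (∀ x y : α, x ≤ y ↔ ∀ i, r i x y) ∧
    Cardinal.mk ι = κ}

/-- The element `a_i` of the standard example, realized in the `d`-cube:
`1` in the `i`-th coordinate and `0` elsewhere. -/
def cubeA (d : ℕ) (i : Fin d) : Fin d → Bool := fun k => decide (k = i)

/-- The element `b_i` of the standard example, realized in the `d`-cube:
`0` in the `i`-th coordinate and `1` elsewhere. -/
def cubeB (d : ℕ) (i : Fin d) : Fin d → Bool := fun k => decide (k ≠ i)

/-- The standard example `S_d`, realized as a subset of the `d`-cube. -/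
def stdExSet (d : ℕ) : Set (Fin d → Bool) := Set.range (cubeA d) ∪ Set.range (cubeB d)

/-- If a poset order-embeds into a product of chains indexed by `ι` (in the sense that
the order is the pullback of the product order), then `mk ι` is a realizer cardinal. -/
theorem aux_realizer_mem {α ι : Type} [PartialOrder α] (T : ι → Type)
    [∀ i, LinearOrder (T i)] (f : α → ∀ i, T i)
    (hf : ∀ x y, x ≤ y ↔ ∀ i, f x i ≤ f y i) :
    Cardinal.mk ι ∈ {κ : Cardinal | ∃ (ι' : Type) (r : ι' → α → α → Prop),
      (∀ i, IsLinearOrder α (r i)) ∧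
      (∀ x y : α, x ≤ y ↔ ∀ i, r i x y) ∧
      Cardinal.mk ι' = κ} := by
  obtain ⟨L, hL, hext⟩ := extend_partialOrder ((· ≤ ·) : α → α → Prop)
  haveI := hL
  refine ⟨ι, fun i x y => f x i < f y i ∨ (f x i = f y i ∧ L x y), fun i => ?_, fun x y => ?_, rfl⟩
  · have hrefl : ∀ x, f x i < f x i ∨ (f x i = f x i ∧ L x x) :=
      fun x => Or.inr ⟨rfl, refl_of L x⟩
    have htrans : ∀ x y z, (f x i < f y i ∨ (f x i = f y i ∧ L x y)) →
        (f y i < f z i ∨ (f y i = f z i ∧ L y z)) →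
        (f x i < f z i ∨ (f x i = f z i ∧ L x z)) := by
      rintro x y z (h1 | ⟨h1, h1'⟩) (h2 | ⟨h2, h2'⟩)
      · exact Or.inl (h1.trans h2)
      · exact Or.inl (h1.trans_eq h2)
      · exact Or.inl (h1.trans_lt h2)
      · exact Or.inr ⟨h1.trans h2, trans_of L h1' h2'⟩
    have hanti : ∀ x y, (f x i < f y i ∨ (f x i = f y i ∧ L x y)) →
        (f y i < f x i ∨ (f y i = f x i ∧ L y x)) → x = y := by
      rintro x y (h1 | ⟨h1, h1'⟩) (h2 | ⟨h2, h2'⟩)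
      · exact absurd h2 (asymm h1)
      · exact absurd h2 h1.ne'
      · exact absurd h1 h2.ne'
      · exact antisymm_of L h1' h2'
    have htot : ∀ x y, (f x i < f y i ∨ (f x i = f y i ∧ L x y)) ∨
        (f y i < f x i ∨ (f y i = f x i ∧ L y x)) := by
      intro x y
      rcases lt_trichotomy (f x i) (f y i) with h | h | h
      · exact Or.inl (Or.inl h)
      · rcases total_of L x y with h' | h'
        · exact Or.inl (Or.inr ⟨h, h'⟩)
        · exact Or.inr (Or.inr ⟨h.symm, h'⟩)
      · exact Or.inr (Or.inl h)
    exact { refl := hrefl, trans := htrans, antisymm := hanti, total := htot }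
  · constructor
    · intro h i
      rcases lt_or_eq_of_le ((hf x y).1 h i) with h' | h'
      · exact Or.inl h'
      · exact Or.inr ⟨h', hext x y h⟩
    · intro h
      refine (hf x y).2 fun i => ?_
      rcases h i with h' | ⟨h', _⟩
      · exact h'.le
      · exact h'.le

/-- The standard-example lower bound, stated for an arbitrary realizer cardinal. -/
theorem aux_le_of_mem {α : Type} [PartialOrder α] {d : ℕ} (A B : Fin d → α)
    (h1 : ∀ i, ¬ A i ≤ B i) (h2 : ∀ i j : Fin d, i ≠ j → A i ≤ B j)
    (h3 : Function.Injective B) {κ : Cardinal}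
    (hκ : κ ∈ {κ : Cardinal | ∃ (ι' : Type) (r : ι' → α → α → Prop),
      (∀ i, IsLinearOrder α (r i)) ∧
      (∀ x y : α, x ≤ y ↔ ∀ i, r i x y) ∧
      Cardinal.mk ι' = κ}) : (d : Cardinal) ≤ κ := by
  obtain ⟨ι, r, hlin, hiff, rfl⟩ := hκ
  have hex : ∀ i : Fin d, ∃ j, ¬ r j (A i) (B i) := by
    intro i
    by_contra hc
    push_neg at hc
    exact h1 i ((hiff _ _).2 hc)
  choose k hk using hex
  have hkinj : Function.Injective k := by
    intro i j hij
    by_contra hne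
    haveI := hlin (k i)
    haveI := hlin (k j)
    have hBAi : r (k i) (B i) (A i) := (total_of (r (k i)) _ _).resolve_left (hk i)
    have hBAj : r (k i) (B j) (A j) := by
      rw [hij]; exact (total_of (r (k j)) _ _).resolve_left (hk j)
    have hij1 : r (k i) (A i) (B j) := (hiff _ _).1 (h2 i j hne) (k i)
    have hij2 : r (k i) (A j) (B i) := (hiff _ _).1 (h2 j i (Ne.symm hne)) (k i)
    have : B i = B j :=
      antisymm_of (r (k i)) (trans_of _ hBAi hij1) (trans_of _ hBAj hij2)
    exact hne (h3 this)
  calc (d : Cardinal) = Cardinal.mk (Fin d) := (Cardinal.mk_fin d).symm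
    _ ≤ Cardinal.mk ι := Cardinal.mk_le_of_injective hkinj

theorem stmt2 (d : ℕ) (hd : 3 ≤ d) (P : Set (Fin d → Bool))
    (hSd : stdExSet d ⊆ P)
    (hP : P ⊆ {x | x ≠ (fun _ => false) ∧ x ≠ (fun _ => true)})
    (C₀ C₁ : Type) [LinearOrder C₀] [Nonempty C₀] [LinearOrder C₁] [Nonempty C₁] :
    orderDim (↥P × C₀ × C₁) = d ∧ orderDim ↥P = d := by
  obtain ⟨c₀⟩ := ‹Nonempty C₀›
  obtain ⟨c₁⟩ := ‹Nonempty C₁›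
  -- The standard example elements, as members of P.
  have hAmem : ∀ i, cubeA d i ∈ P := fun i => hSd (Or.inl ⟨i, rfl⟩)
  have hBmem : ∀ i, cubeB d i ∈ P := fun i => hSd (Or.inr ⟨i, rfl⟩)
  set A : Fin d → ↥P := fun i => ⟨cubeA d i, hAmem i⟩ with hA
  set B : Fin d → ↥P := fun i => ⟨cubeB d i, hBmem i⟩ with hB
  have hAB1 : ∀ i, ¬ (A i : Fin d → Bool) ≤ (B i : Fin d → Bool) := by
    intro i h
    have h' : cubeA d i i ≤ cubeB d i i := h i
    have e1 : cubeA d i i = true := by simp [cubeA]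
    have e2 : cubeB d i i = false := by simp [cubeB]
    rw [e1, e2] at h'
    exact absurd h' (by decide)
  have hAB2 : ∀ i j : Fin d, i ≠ j → (A i : Fin d → Bool) ≤ (B j : Fin d → Bool) := by
    intro i j hij k
    show cubeA d i k ≤ cubeB d j k
    simp only [cubeA, cubeB]
    rcases eq_or_ne k i with rfl | hk
    · simp [hij]
    · simp [hk]
  have hBinj : Function.Injective B := by
    intro i j h
    by_contra hne
    have h' : cubeB d i = cubeB d j := congrArg Subtype.val h
    have h2 := congrFun h' i
    have e1 : cubeB d i i = false := by
      simp only [cubeB]; exact decide_eq_false fun hh => hh rfl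
    have e2 : cubeB d j i = true := by
      simp only [cubeB]; exact decide_eq_true hne
    rw [e1, e2] at h2
    exact Bool.false_ne_true h2
  -- Every element of P has a true coordinate and a false coordinate.
  have hfalse : ∀ x : ↥P, ∃ j, (x : Fin d → Bool) j = false := by
    intro x
    by_contra hc
    push_neg at hc
    exact (hP x.2).2 (funext fun j => by
      have := hc j; cases h' : (x : Fin d → Bool) j <;> simp_all)
  have htrue : ∀ x : ↥P, ∃ j, (x : Fin d → Bool) j = true := by
    intro x
    by_contra hc
    push_neg at hc
    exact (hP x.2).1 (funext fun j => by
      have := hc j; cases h' : (x : Fin d → Bool) j <;> simp_all)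
  -- Upper bound for P itself.
  have memP : (Cardinal.mk (Fin d)) ∈ _ :=
    aux_realizer_mem (α := ↥P) (fun _ : Fin d => Bool)
      (fun x i => (x : Fin d → Bool) i) (fun x y => Iff.rfl)
  -- Upper bound for the product.
  set T : Type := Lex (Bool × Lex (C₀ ⊕ C₁)) with hT
  set f : ↥P × C₀ × C₁ → Fin d → T := fun p i =>
    toLex ((p.1 : Fin d → Bool) i,
      toLex (if (p.1 : Fin d → Bool) i then Sum.inr p.2.2 else Sum.inl p.2.1)) with hf
  have hfiff : ∀ x y : ↥P × C₀ × C₁, x ≤ y ↔ ∀ i, f x i ≤ f y i := by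
    intro x y
    constructor
    · rintro ⟨h1, h2, h3⟩ i
      have h1' : (x.1 : Fin d → Bool) i ≤ (y.1 : Fin d → Bool) i := h1 i
      rcases lt_or_eq_of_le h1' with h' | h'
      · exact Prod.Lex.le_iff (x := toLex _) (y := toLex _) |>.2 (Or.inl h')
      · refine Prod.Lex.le_iff (x := toLex _) (y := toLex _) |>.2 (Or.inr ⟨h', ?_⟩)
        simp only [ofLex_toLex]
        rw [h']
        cases hb : (y.1 : Fin d → Bool) i
        · simpa using (Sum.Lex.inl_le_inl_iff (α := C₀) (β := C₁)).2 h2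
        · simpa using (Sum.Lex.inr_le_inr_iff (α := C₀) (β := C₁)).2 h3
    · intro h
      have hxy : (x.1 : Fin d → Bool) ≤ (y.1 : Fin d → Bool) := by
        intro i
        rcases (Prod.Lex.le_iff (x := toLex _) (y := toLex _)).1 (h i) with h' | ⟨h', _⟩
        · exact le_of_lt h'
        · exact le_of_eq h'
      refine ⟨hxy, ?_, ?_⟩
      · obtain ⟨j, hj⟩ := hfalse y.1
        have hxj : (x.1 : Fin d → Bool) j = false := by
          have := hxy j; rw [hj] at this; exact le_antisymm this (Bool.false_le _)
        rcases (Prod.Lex.le_iff (x := toLex _) (y := toLex _)).1 (h j) with h' | ⟨_, h'⟩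
        · rw [hxj, hj] at h'; exact absurd h' (lt_irrefl _)
        · simp only [hxj, hj, if_false] at h'
          exact Sum.Lex.inl_le_inl_iff.1 h'
      · obtain ⟨j, hj⟩ := htrue x.1
        have hyj : (y.1 : Fin d → Bool) j = true := by
          have := hxy j; rw [hj] at this; exact le_antisymm (Bool.le_true _) this
        rcases (Prod.Lex.le_iff (x := toLex _) (y := toLex _)).1 (h j) with h' | ⟨_, h'⟩
        · rw [hj, hyj] at h'; exact absurd h' (lt_irrefl _)
        · simp only [hj, hyj, if_true] at h'
          exact Sum.Lex.inr_le_inr_iff.1 h'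
  have memQ : (Cardinal.mk (Fin d)) ∈ _ :=
    aux_realizer_mem (α := ↥P × C₀ × C₁) (fun _ : Fin d => T) f hfiff
  -- Lower bounds via the standard example.
  have hABQ1 : ∀ i, ¬ ((A i, c₀, c₁) : ↥P × C₀ × C₁) ≤ (B i, c₀, c₁) := by
    intro i h
    exact hAB1 i h.1
  have hABQ2 : ∀ i j : Fin d, i ≠ j →
      ((A i, c₀, c₁) : ↥P × C₀ × C₁) ≤ (B j, c₀, c₁) := by
    intro i j hij
    exact ⟨hAB2 i j hij, le_refl _, le_refl _⟩
  have hBQinj : Function.Injective (fun i : Fin d => ((B i, c₀, c₁) : ↥P × C₀ × C₁)) := by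
    intro i j h
    exact hBinj (congrArg Prod.fst h)
  constructor
  · refine le_antisymm ?_ ?_
    · calc orderDim (↥P × C₀ × C₁) ≤ Cardinal.mk (Fin d) := csInf_le' memQ
        _ = d := Cardinal.mk_fin d
    · refine le_csInf ⟨_, memQ⟩ fun κ hκ => ?_
      exact aux_le_of_mem _ _ hABQ1 hABQ2 hBQinj hκ
  · refine le_antisymm ?_ ?_
    · calc orderDim ↥P ≤ Cardinal.mk (Fin d) := csInf_le' memP
        _ = d := Cardinal.mk_fin d
    · refine le_csInf ⟨_, memP⟩ fun κ hκ => ?_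
      exact aux_le_of_mem A B hAB1 hAB2 hBinj hκ
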